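/- Let X be compact metrizable totally disconnected, h a homeomorphism, and (Pₙ) an h-refined sequence of partitions. Define the connectivity relation: Z₂ ∈ P_{m+2i} is connected to Z₁ ∈ Pₘ if there is a chain Z₂ = W_{m+2i} ⊆ W_{m+2i−1}' ⊆ ⋯ where at each step k, W_{k+1} is contained either in W_k or in h^{(−1)^k}(W_k) with W_k ∈ P_k, terminating at W_m = Z₁. Then Z₂ is connected to Z₁ if and only if Z₂ ⊆ h^j(Z₁) for some integer j with |j| ≤ i, if and only if Z₂ ∩ h^j(Z₁) ≠ ∅ for some |j| ≤ i. -/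

import Mathlib

def IsClopenPartition {X : Type*} [TopologicalSpace X] (P : Set (Set X)) : Prop :=
  P.Finite ∧ (∀ Z ∈ P, Z.Nonempty ∧ IsClopen Z) ∧
    P.PairwiseDisjoint id ∧ ⋃₀ P = Set.univ

def Refines {X : Type*} (Q P : Set (Set X)) : Prop :=
  ∀ Z ∈ Q, ∃ W ∈ P, Z ⊆ W

/-- `Chain h P k W l Z` : the block `W ∈ P k` is connected to the block `Z ∈ P l`
by a directed path of blue (inclusion) and red (`h^{(-1)^level}`-translate) edges
in the `h`-diagram. -/
inductive Chain {X : Type*} [TopologicalSpace X] (h : X ≃ₜ X) (P : ℕ → Set (Set X)) :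
    ℕ → Set X → ℕ → Set X → Prop
  | refl (k : ℕ) (Z : Set X) (hZ : Z ∈ P k) : Chain h P k Z k Z
  | blue {k l : ℕ} {W W' Z : Set X} (hW' : W' ∈ P (k + 1)) (hsub : W' ⊆ W)
      (hc : Chain h P k W l Z) : Chain h P (k + 1) W' l Z
  | red {k l : ℕ} {W W' Z : Set X} (hW' : W' ∈ P (k + 1))
      (hsub : W' ⊆ if Even k then ⇑h '' W else ⇑h.symm '' W)
      (hc : Chain h P k W l Z) : Chain h P (k + 1) W' l Z

lemma img_add_one {X : Type*} [TopologicalSpace X] (h : X ≃ₜ X) (j : ℤ) (Z : Set X) :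
    ⇑h '' (⇑(h.toEquiv ^ j) '' Z) = ⇑(h.toEquiv ^ (j + 1)) '' Z := by
  rw [← Set.image_comp, add_comm, zpow_add, zpow_one, Equiv.Perm.coe_mul,
    Homeomorph.coe_toEquiv]

lemma img_sub_one {X : Type*} [TopologicalSpace X] (h : X ≃ₜ X) (j : ℤ) (Z : Set X) :
    ⇑h.symm '' (⇑(h.toEquiv ^ j) '' Z) = ⇑(h.toEquiv ^ (j - 1)) '' Z := by
  rw [← Set.image_comp, show j - 1 = -1 + j by ring, zpow_add, zpow_neg_one,
    Equiv.Perm.coe_mul]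
  rfl

/-- Forward direction: a chain from level `k` to level `l` gives an inclusion
into a translate `h^j` with `-(#odd levels) ≤ j ≤ #even levels` in `[l,k)`. -/
lemma chain_to_subset {X : Type*} [TopologicalSpace X] (h : X ≃ₜ X)
    (P : ℕ → Set (Set X)) {k l : ℕ} {W Z : Set X} (hc : Chain h P k W l Z) :
    l ≤ k ∧ ∃ j : ℤ, -((k : ℤ) / 2 - (l : ℤ) / 2) ≤ j ∧
      j ≤ ((k : ℤ) + 1) / 2 - ((l : ℤ) + 1) / 2 ∧ W ⊆ ⇑(h.toEquiv ^ j) '' Z := by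
  induction hc with
  | refl k Z hZ => exact ⟨le_refl _, 0, by omega, by omega, by simp⟩
  | blue hW' hsub hc ih =>
      obtain ⟨hlk, j, h1, h2, h3⟩ := ih
      exact ⟨by omega, j, by omega, by omega, hsub.trans h3⟩
  | @red k l W W' Z hW' hsub hc ih =>
      obtain ⟨hlk, j, h1, h2, h3⟩ := ih
      by_cases hk : Even k
      · rw [if_pos hk] at hsub
        rw [Nat.even_iff] at hk
        refine ⟨by omega, j + 1, by omega, by omega, ?_⟩
        calc W' ⊆ ⇑h '' W := hsub
          _ ⊆ ⇑h '' (⇑(h.toEquiv ^ j) '' Z) := Set.image_mono h3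
          _ = ⇑(h.toEquiv ^ (j + 1)) '' Z := img_add_one h j Z
      · rw [if_neg hk] at hsub
        rw [Nat.even_iff] at hk
        refine ⟨by omega, j - 1, by omega, by omega, ?_⟩
        calc W' ⊆ ⇑h.symm '' W := hsub
          _ ⊆ ⇑h.symm '' (⇑(h.toEquiv ^ j) '' Z) := Set.image_mono h3
          _ = ⇑(h.toEquiv ^ (j - 1)) '' Z := img_sub_one h j Z

/-- Backward direction: a nonempty intersection with a translate `h^j`, `|j| ≤ i`,
gives a chain. -/
lemma nonempty_to_chain {X : Type*} [TopologicalSpace X] (h : X ≃ₜ X)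
    (P : ℕ → Set (Set X)) (hpart : ∀ n, IsClopenPartition (P n))
    (href : ∀ n, Refines (P (n + 1)) (P n) ∧
      Refines (P (n + 1)) (Set.image (⇑h) '' P n) ∧
      Refines (P (n + 1)) (Set.image (⇑h.symm) '' P n))
    (m : ℕ) : ∀ (i : ℕ) (Z₂ Z₁ : Set X), Z₂ ∈ P (m + 2 * i) → Z₁ ∈ P m →
    (∃ j : ℤ, |j| ≤ (i : ℤ) ∧ (Z₂ ∩ ⇑(h.toEquiv ^ j) '' Z₁).Nonempty) →
    Chain h P (m + 2 * i) Z₂ m Z₁ := by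
  intro i
  induction i with
  | zero =>
      intro Z₂ Z₁ hZ₂ hZ₁ ⟨j, hj, x, hx2, hx1⟩
      have hj0 : j = 0 := by rw [abs_le] at hj; omega
      rw [hj0] at hx1
      simp only [zpow_zero, Equiv.Perm.coe_one, Set.image_id] at hx1
      have : Z₂ = Z₁ := by
        by_contra hne
        exact Set.disjoint_left.mp ((hpart m).2.2.1 hZ₂ hZ₁ hne) hx2 hx1
      rw [this]
      exact Chain.refl m Z₁ hZ₁
  | succ i ih =>
      intro Z₂ Z₁ hZ₂ hZ₁ ⟨j, hj, x, hx2, hx1⟩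
      rw [abs_le] at hj
      push_cast at hj
      have hZ₂' : Z₂ ∈ P (m + 2 * i + 1 + 1) := hZ₂
      rcases Nat.even_or_odd m with hm | hm
      · have hmev : Even (m + 2 * i) := by
          rcases hm with ⟨a, ha⟩; exact ⟨a + i, by omega⟩
        have hmod : ¬ Even (m + 2 * i + 1) := by
          simp [Nat.even_add_one, hmev]
        rcases lt_trichotomy j (i + 1) with hlt | heq | hgt
        · rcases lt_trichotomy (-(i : ℤ) - 1) j with hlt2 | heq2 | hgt2
          · -- |j| ≤ i : blue, blue
            obtain ⟨W', hW', hsub1⟩ := (href (m + 2 * i + 1)).1 Z₂ hZ₂'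
            obtain ⟨W, hW, hsub2⟩ := (href (m + 2 * i)).1 W' hW'
            have hchain := ih W Z₁ hW hZ₁
              ⟨j, by rw [abs_le]; constructor <;> omega,
                x, hsub2 (hsub1 hx2), hx1⟩
            have c : Chain h P (m + 2 * i + 1 + 1) Z₂ m Z₁ :=
              Chain.blue hZ₂' hsub1 (Chain.blue hW' hsub2 hchain)
            exact c
          · -- j = -(i+1) : top red (h.symm, since level m+2i+1 is odd), then blue
            obtain ⟨V, hV, hsub1⟩ := (href (m + 2 * i + 1)).2.2 Z₂ hZ₂'
            obtain ⟨W', hW', rfl⟩ := hV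
            obtain ⟨W, hW, hsub2⟩ := (href (m + 2 * i)).1 W' hW'
            have hxW : h x ∈ W := by
              obtain ⟨y, hy, hyx⟩ := hsub1 hx2
              have : h x = y := by rw [← hyx]; simp
              rw [this]; exact hsub2 hy
            have hx1' : h x ∈ ⇑(h.toEquiv ^ (j + 1)) '' Z₁ := by
              rw [← img_add_one]
              exact ⟨x, hx1, rfl⟩
            have hchain := ih W Z₁ hW hZ₁
              ⟨j + 1, by rw [abs_le]; constructor <;> omega, h x, hxW, hx1'⟩
            have c : Chain h P (m + 2 * i + 1 + 1) Z₂ m Z₁ :=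
              Chain.red hZ₂' (by rw [if_neg hmod]; exact hsub1)
                (Chain.blue hW' hsub2 hchain)
            exact c
          · omega
        · -- j = i+1 : blue, then lower red (h, since level m+2i is even)
          obtain ⟨W', hW', hsub1⟩ := (href (m + 2 * i + 1)).1 Z₂ hZ₂'
          obtain ⟨V, hV, hsub2⟩ := (href (m + 2 * i)).2.1 W' hW'
          obtain ⟨W, hW, rfl⟩ := hV
          have hxW : h.symm x ∈ W := by
            obtain ⟨y, hy, hyx⟩ := hsub2 (hsub1 hx2)
            have : h.symm x = y := by rw [← hyx]; simp
            rw [this]; exact hy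
          have hx1' : h.symm x ∈ ⇑(h.toEquiv ^ (j - 1)) '' Z₁ := by
            rw [← img_sub_one]
            exact ⟨x, hx1, rfl⟩
          have hchain := ih W Z₁ hW hZ₁
            ⟨j - 1, by rw [abs_le]; constructor <;> omega, h.symm x, hxW, hx1'⟩
          have c : Chain h P (m + 2 * i + 1 + 1) Z₂ m Z₁ :=
            Chain.blue hZ₂' hsub1
              (Chain.red hW' (by rw [if_pos hmev]; exact hsub2) hchain)
          exact c
        · omega
      · have hmev : ¬ Even (m + 2 * i) := by
          rw [Nat.even_add]; simp [Nat.odd_iff.mp hm, Nat.even_iff]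
        have hmod : Even (m + 2 * i + 1) := by
          exact Nat.even_add_one.mpr hmev
        rcases lt_trichotomy j (i + 1) with hlt | heq | hgt
        · rcases lt_trichotomy (-(i : ℤ) - 1) j with hlt2 | heq2 | hgt2
          · -- |j| ≤ i : blue, blue
            obtain ⟨W', hW', hsub1⟩ := (href (m + 2 * i + 1)).1 Z₂ hZ₂'
            obtain ⟨W, hW, hsub2⟩ := (href (m + 2 * i)).1 W' hW'
            have hchain := ih W Z₁ hW hZ₁
              ⟨j, by rw [abs_le]; constructor <;> omega,
                x, hsub2 (hsub1 hx2), hx1⟩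
            have c : Chain h P (m + 2 * i + 1 + 1) Z₂ m Z₁ :=
              Chain.blue hZ₂' hsub1 (Chain.blue hW' hsub2 hchain)
            exact c
          · -- j = -(i+1) : blue, then lower red (h.symm, since level m+2i is odd)
            obtain ⟨W', hW', hsub1⟩ := (href (m + 2 * i + 1)).1 Z₂ hZ₂'
            obtain ⟨V, hV, hsub2⟩ := (href (m + 2 * i)).2.2 W' hW'
            obtain ⟨W, hW, rfl⟩ := hV
            have hxW : h x ∈ W := by
              obtain ⟨y, hy, hyx⟩ := hsub2 (hsub1 hx2)
              have : h x = y := by rw [← hyx]; simp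
              rw [this]; exact hy
            have hx1' : h x ∈ ⇑(h.toEquiv ^ (j + 1)) '' Z₁ := by
              rw [← img_add_one]
              exact ⟨x, hx1, rfl⟩
            have hchain := ih W Z₁ hW hZ₁
              ⟨j + 1, by rw [abs_le]; constructor <;> omega, h x, hxW, hx1'⟩
            have c : Chain h P (m + 2 * i + 1 + 1) Z₂ m Z₁ :=
              Chain.blue hZ₂' hsub1
                (Chain.red hW' (by rw [if_neg hmev]; exact hsub2) hchain)
            exact c
          · omega
        · -- j = i+1 : top red (h, since level m+2i+1 is even), then blue
          obtain ⟨V, hV, hsub1⟩ := (href (m + 2 * i + 1)).2.1 Z₂ hZ₂'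
          obtain ⟨W', hW', rfl⟩ := hV
          obtain ⟨W, hW, hsub2⟩ := (href (m + 2 * i)).1 W' hW'
          have hxW : h.symm x ∈ W := by
            obtain ⟨y, hy, hyx⟩ := hsub1 hx2
            have : h.symm x = y := by rw [← hyx]; simp
            rw [this]; exact hsub2 hy
          have hx1' : h.symm x ∈ ⇑(h.toEquiv ^ (j - 1)) '' Z₁ := by
            rw [← img_sub_one]
            exact ⟨x, hx1, rfl⟩
          have hchain := ih W Z₁ hW hZ₁
            ⟨j - 1, by rw [abs_le]; constructor <;> omega, h.symm x, hxW, hx1'⟩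
          have c : Chain h P (m + 2 * i + 1 + 1) Z₂ m Z₁ :=
            Chain.red hZ₂' (by rw [if_pos hmod]; exact hsub1)
              (Chain.blue hW' hsub2 hchain)
          exact c
        · omega

theorem stmt16 {X : Type*} [TopologicalSpace X] [CompactSpace X]
    [TopologicalSpace.MetrizableSpace X] [TotallyDisconnectedSpace X]
    (h : X ≃ₜ X) (P : ℕ → Set (Set X))
    (hpart : ∀ n, IsClopenPartition (P n))
    (href : ∀ n, Refines (P (n + 1)) (P n) ∧
      Refines (P (n + 1)) (Set.image (⇑h) '' P n) ∧
      Refines (P (n + 1)) (Set.image (⇑h.symm) '' P n))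
    (m i : ℕ) (Z₂ Z₁ : Set X) (hZ₂ : Z₂ ∈ P (m + 2 * i)) (hZ₁ : Z₁ ∈ P m) :
    (Chain h P (m + 2 * i) Z₂ m Z₁ ↔
      ∃ j : ℤ, |j| ≤ (i : ℤ) ∧ Z₂ ⊆ ⇑(h.toEquiv ^ j) '' Z₁) ∧
    (Chain h P (m + 2 * i) Z₂ m Z₁ ↔
      ∃ j : ℤ, |j| ≤ (i : ℤ) ∧ (Z₂ ∩ ⇑(h.toEquiv ^ j) '' Z₁).Nonempty) := by
  have fwd : Chain h P (m + 2 * i) Z₂ m Z₁ →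
      ∃ j : ℤ, |j| ≤ (i : ℤ) ∧ Z₂ ⊆ ⇑(h.toEquiv ^ j) '' Z₁ := by
    intro hc
    obtain ⟨-, j, h1, h2, h3⟩ := chain_to_subset h P hc
    refine ⟨j, ?_, h3⟩
    rw [abs_le]
    push_cast at h1 h2
    omega
  have sn : (∃ j : ℤ, |j| ≤ (i : ℤ) ∧ Z₂ ⊆ ⇑(h.toEquiv ^ j) '' Z₁) →
      ∃ j : ℤ, |j| ≤ (i : ℤ) ∧ (Z₂ ∩ ⇑(h.toEquiv ^ j) '' Z₁).Nonempty := by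
    rintro ⟨j, hj, hsub⟩
    obtain ⟨x, hx⟩ := ((hpart (m + 2 * i)).2.1 Z₂ hZ₂).1
    exact ⟨j, hj, x, hx, hsub hx⟩
  have bwd : (∃ j : ℤ, |j| ≤ (i : ℤ) ∧ (Z₂ ∩ ⇑(h.toEquiv ^ j) '' Z₁).Nonempty) →
      Chain h P (m + 2 * i) Z₂ m Z₁ :=
    nonempty_to_chain h P hpart href m i Z₂ Z₁ hZ₂ hZ₁
  exact ⟨⟨fwd, fun hj => bwd (sn hj)⟩, ⟨fun hc => sn (fwd hc), bwd⟩⟩
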